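/- For every integer N ≥ 1 and every R ∈ (0,1), the function h_N(R) = ∑_{k=N+1}^∞ cos(2πkR)/(4π²k²) satisfies the exact identity h_N(R) = h_N(1/2) + (1/2) ∫_{1/2}^R (R − t) · sin((2N+1)πt) / sin(πt) dt, where h_N(1/2) = ∑_{k=N+1}^∞ (−1)^k/(4π²k²). -/

import Mathlib

open Real

private lemma dirichlet_ker (N : ℕ) (t : ℝ) :
    Real.sin ((2*(N:ℝ)+1)*π*t)
      = Real.sin (π*t) * (1 + 2 * ∑ k ∈ Finset.range N, Real.cos (2*π*((k:ℝ)+1)*t)) := by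
  induction N with
  | zero => simp
  | succ n ih =>
    have key : Real.sin ((2*((n:ℝ)+1)+1)*π*t) - Real.sin ((2*(n:ℝ)+1)*π*t)
        = 2 * Real.sin (π*t) * Real.cos (2*π*((n:ℝ)+1)*t) := by
      rw [Real.sin_sub_sin]; ring_nf
    rw [Finset.sum_range_succ]
    push_cast
    nlinarith [key, ih]

private lemma hasDerivAt_term (R a t : ℝ) (ha : a ≠ 0) :
    HasDerivAt (fun t => (R-t)*Real.sin (a*t)/a - Real.cos (a*t)/a^2)
      ((R-t)*Real.cos (a*t)) t := by
  have h1 : HasDerivAt (fun t : ℝ => a*t) a t := by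
    simpa using (hasDerivAt_id t).const_mul a
  have hs := (Real.hasDerivAt_sin (a*t)).comp t h1
  have hc := (Real.hasDerivAt_cos (a*t)).comp t h1
  have hRt : HasDerivAt (fun t : ℝ => R - t) (-1) t := by
    simpa using (hasDerivAt_id t).const_sub R
  have := ((hRt.mul hs).div_const a).sub (hc.div_const (a^2))
  refine this.congr_deriv ?_
  simp only [Function.comp_apply]; field_simp; ring

private lemma integral_cos_term (R : ℝ) (k : ℕ) :
    ∫ t in (1/2:ℝ)..R, (R-t)*Real.cos (2*π*((k:ℝ)+1)*t)
      = ((-1:ℝ)^(k+1) - Real.cos (2*π*((k:ℝ)+1)*R))/(4*π^2*((k:ℝ)+1)^2) := by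
  set a : ℝ := 2*π*((k:ℝ)+1) with ha_def
  have ha : a ≠ 0 := by positivity
  have hcont : Continuous fun t : ℝ => (R-t)*Real.cos (a*t) :=
    (continuous_const.sub continuous_id).mul
      (Real.continuous_cos.comp (continuous_const.mul continuous_id))
  rw [intervalIntegral.integral_eq_sub_of_hasDerivAt
      (fun t _ => hasDerivAt_term R a t ha) (hcont.intervalIntegrable _ _)]
  have h1 : a * (1/2) = ((k+1:ℕ):ℝ) * π := by push_cast [ha_def]; ring
  have hsin : Real.sin (a * (1/2)) = 0 := by
    rw [h1]; exact Real.sin_nat_mul_pi (k+1)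
  have hcos : Real.cos (a * (1/2)) = (-1:ℝ)^(k+1) := by
    rw [h1]
    simpa using Real.cos_nat_mul_pi_sub 0 (k+1)
  rw [hsin, hcos]
  have ha2 : a^2 = 4*π^2*((k:ℝ)+1)^2 := by rw [ha_def]; ring
  rw [ha2]
  field_simp
  ring

private lemma integral_lin (R : ℝ) :
    ∫ t in (1/2:ℝ)..R, (R-t) = (R-1/2)^2/2 := by
  have hder : ∀ t ∈ Set.uIcc (1/2:ℝ) R,
      HasDerivAt (fun t : ℝ => -(R-t)^2/2) (R-t) t := by
    intro t _
    have hRt : HasDerivAt (fun t : ℝ => R - t) (-1) t := by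
      simpa using (hasDerivAt_id t).const_sub R
    have := ((hRt.pow 2).neg).div_const 2
    refine this.congr_deriv ?_
    ring
  rw [intervalIntegral.integral_eq_sub_of_hasDerivAt hder
      ((continuous_const.sub continuous_id).intervalIntegrable _ _)]
  ring

private lemma hasSum_g (x : ℝ) (hx : x ∈ Set.Icc (0:ℝ) 1) :
    HasSum (fun n : ℕ => Real.cos (2*π*(n:ℝ)*x)/(4*π^2*(n:ℝ)^2)) ((x^2 - x + 1/6)/4) := by
  have h := (hasSum_one_div_nat_pow_mul_cos (k := 1) one_ne_zero hx).div_const (4*π^2)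
  have hb : (Polynomial.map (algebraMap ℚ ℝ) (Polynomial.bernoulli (2*1))).eval x
      = x^2 - x + 1/6 := by
    have h2 : bernoulli 2 = 1/6 := by rw [bernoulli, bernoulli'_two]; norm_num
    norm_num [Polynomial.bernoulli, Finset.sum_range_succ, bernoulli_zero, bernoulli_one, h2]
    ring
  have hpi : (π:ℝ) ≠ 0 := Real.pi_ne_zero
  have hfun : (fun n : ℕ => Real.cos (2*π*(n:ℝ)*x)/(4*π^2*(n:ℝ)^2))
      = fun n : ℕ => 1/(n:ℝ)^(2*1) * Real.cos (2*π*(n:ℝ)*x) / (4*π^2) := by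
    funext n
    rw [one_div, inv_mul_eq_div, div_div, mul_comm ((n:ℝ)^(2*1)) (4*π^2)]
  have hval : (-1:ℝ)^(1+1) * (2*π)^(2*1) / 2 / ((2*1).factorial : ℝ)
        * ((Polynomial.map (algebraMap ℚ ℝ) (Polynomial.bernoulli (2*1))).eval x) / (4*π^2)
      = (x^2 - x + 1/6)/4 := by
    rw [hb]
    norm_num [Nat.factorial]
    field_simp
  rw [hfun, ← hval]
  exact h

private lemma hasSum_tail (N : ℕ) (x : ℝ) (hx : x ∈ Set.Icc (0:ℝ) 1) :
    HasSum (fun k : ℕ => Real.cos (2*π*((N:ℝ)+1+(k:ℝ))*x)/(4*π^2*((N:ℝ)+1+(k:ℝ))^2))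
      ((x^2 - x + 1/6)/4
        - ∑ i ∈ Finset.range (N+1), Real.cos (2*π*(i:ℝ)*x)/(4*π^2*(i:ℝ)^2)) := by
  set f : ℕ → ℝ := fun n => Real.cos (2*π*(n:ℝ)*x)/(4*π^2*(n:ℝ)^2) with hf
  have h := hasSum_g x hx
  have h2 : HasSum (fun k : ℕ => f (k + (N+1)))
      ((x^2 - x + 1/6)/4 - ∑ i ∈ Finset.range (N+1), f i) := by
    rw [hasSum_nat_add_iff (N+1)]
    simpa using h
  convert h2 using 2 with k
  push_cast [hf]; ring_nf

theorem hN_taylor_identity (N : ℕ) (hN : 1 ≤ N) (R : ℝ) (hR : R ∈ Set.Ioo (0 : ℝ) 1) :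
    (∑' k : ℕ,
        Real.cos (2 * π * ((N : ℝ) + 1 + (k : ℝ)) * R) /
          (4 * π ^ 2 * ((N : ℝ) + 1 + (k : ℝ)) ^ 2)) =
      (∑' k : ℕ, (-1 : ℝ) ^ (N + 1 + k) / (4 * π ^ 2 * ((N : ℝ) + 1 + (k : ℝ)) ^ 2)) +
        (1 / 2) * ∫ t in (1 / 2 : ℝ)..R,
          (R - t) * Real.sin ((2 * (N : ℝ) + 1) * π * t) / Real.sin (π * t) := by
  obtain ⟨hR0, hR1⟩ := hR
  have hRIcc : R ∈ Set.Icc (0:ℝ) 1 := ⟨hR0.le, hR1.le⟩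
  have hhalf : (1/2:ℝ) ∈ Set.Icc (0:ℝ) 1 := by norm_num
  -- the two tsums
  have hS1 := (hasSum_tail N R hRIcc).tsum_eq
  have hS2 : (∑' k : ℕ, (-1 : ℝ) ^ (N + 1 + k) / (4 * π ^ 2 * ((N : ℝ) + 1 + (k : ℝ)) ^ 2))
      = ((1/2:ℝ)^2 - 1/2 + 1/6)/4
        - ∑ i ∈ Finset.range (N+1), Real.cos (2*π*(i:ℝ)*(1/2))/(4*π^2*(i:ℝ)^2) := by
    rw [← (hasSum_tail N (1/2) hhalf).tsum_eq]
    congr 1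
    funext k
    congr 1
    have : 2*π*((N:ℝ)+1+(k:ℝ))*(1/2) = ((N+1+k:ℕ):ℝ)*π := by push_cast; ring
    rw [this]
    simpa using (Real.cos_nat_mul_pi_sub 0 (N+1+k)).symm
  -- the integral
  have hsub : Set.uIcc (1/2:ℝ) R ⊆ Set.Ioo (0:ℝ) 1 :=
    (Set.ordConnected_Ioo).uIcc_subset (by norm_num) ⟨hR0, hR1⟩
  have hIcongr : (∫ t in (1/2:ℝ)..R,
        (R - t) * Real.sin ((2 * (N : ℝ) + 1) * π * t) / Real.sin (π * t))
      = ∫ t in (1/2:ℝ)..R,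
          ((R-t) + ∑ k ∈ Finset.range N, 2*((R-t)*Real.cos (2*π*((k:ℝ)+1)*t))) := by
    apply intervalIntegral.integral_congr
    intro t ht
    obtain ⟨ht0, ht1⟩ := hsub ht
    have hs : Real.sin (π*t) ≠ 0 := by
      refine ne_of_gt (Real.sin_pos_of_pos_of_lt_pi (by positivity) ?_)
      nlinarith [Real.pi_pos]
    have hsum : (∑ k ∈ Finset.range N, 2*((R-t)*Real.cos (2*π*((k:ℝ)+1)*t)))
        = (R-t)*(2*∑ k ∈ Finset.range N, Real.cos (2*π*((k:ℝ)+1)*t)) := by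
      rw [Finset.mul_sum, Finset.mul_sum]
      exact Finset.sum_congr rfl (fun k _ => by ring)
    simp only [hsum]
    rw [dirichlet_ker N t]
    rw [mul_left_comm (R - t), mul_div_cancel_left₀ _ hs]
    ring
  have hcont1 : Continuous fun t : ℝ => R - t := continuous_const.sub continuous_id
  have hcontk : ∀ k : ℕ, Continuous fun t : ℝ => 2*((R-t)*Real.cos (2*π*((k:ℝ)+1)*t)) :=
    fun k => continuous_const.mul (hcont1.mul
      (Real.continuous_cos.comp (continuous_const.mul continuous_id)))
  have hIval : (∫ t in (1/2:ℝ)..R,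
        ((R-t) + ∑ k ∈ Finset.range N, 2*((R-t)*Real.cos (2*π*((k:ℝ)+1)*t))))
      = (R-1/2)^2/2 + ∑ k ∈ Finset.range N,
          2*(((-1:ℝ)^(k+1) - Real.cos (2*π*((k:ℝ)+1)*R))/(4*π^2*((k:ℝ)+1)^2)) := by
    rw [intervalIntegral.integral_add (hcont1.intervalIntegrable _ _)
        ((continuous_finset_sum _ (fun k _ => hcontk k)).intervalIntegrable _ _),
      intervalIntegral.integral_finset_sum
        (fun k _ => (hcontk k).intervalIntegrable _ _), integral_lin]
    congr 1
    refine Finset.sum_congr rfl (fun k _ => ?_)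
    rw [intervalIntegral.integral_const_mul, integral_cos_term]
  rw [hS1, hS2, hIcongr, hIval]
  rw [Finset.sum_range_succ' (fun i : ℕ => Real.cos (2*π*(i:ℝ)*R)/(4*π^2*(i:ℝ)^2)) N,
      Finset.sum_range_succ' (fun i : ℕ => Real.cos (2*π*(i:ℝ)*(1/2))/(4*π^2*(i:ℝ)^2)) N]
  have hC : ∀ k ∈ Finset.range N,
      2*(((-1:ℝ)^(k+1) - Real.cos (2*π*((k:ℝ)+1)*R))/(4*π^2*((k:ℝ)+1)^2))
        = 2 * (Real.cos (2*π*(((k+1:ℕ)):ℝ)*(1/2))/(4*π^2*(((k+1:ℕ)):ℝ)^2))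
          - 2 * (Real.cos (2*π*(((k+1:ℕ)):ℝ)*R)/(4*π^2*(((k+1:ℕ)):ℝ)^2)) := by
    intro k _
    have hcos : Real.cos (2*π*(((k+1:ℕ)):ℝ)*(1/2)) = (-1:ℝ)^(k+1) := by
      have : 2*π*(((k+1:ℕ)):ℝ)*(1/2) = ((k+1:ℕ):ℝ)*π := by ring
      rw [this]
      simpa using Real.cos_nat_mul_pi_sub 0 (k+1)
    rw [hcos]
    push_cast
    ring
  rw [Finset.sum_congr rfl hC, Finset.sum_sub_distrib]
  push_cast
  rw [← Finset.mul_sum, ← Finset.mul_sum]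
  norm_num
  ring
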